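/- For each fixed characteristic m, the restriction of epsilon_m to the stabilizer H(m) = {sigma in Sp(g,F_2) : sigma{m} = m} is a group homomorphism H(m) -> {±1}, and it is non-trivial. -/

import Mathlib

open Matrix BigOperators

/-- A characteristic: a vector in `F₂^{2g}`, indexed by `Fin g ⊕ Fin g`
(the first block is `a`, the second is `b`). -/
abbrev Char2 (g : ℕ) := (Fin g ⊕ Fin g) → ZMod 2

/-- The `a`-part of a characteristic. -/
def aPart {g : ℕ} (m : Char2 g) : Fin g → ZMod 2 := fun i => m (Sum.inl i)

/-- The `b`-part of a characteristic. -/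
def bPart {g : ℕ} (m : Char2 g) : Fin g → ZMod 2 := fun i => m (Sum.inr i)

/-- A characteristic `m = (a;b)` is even if `a'b = 0`. -/
def IsEvenChar {g : ℕ} (m : Char2 g) : Prop := aPart m ⬝ᵥ bPart m = 0

/-- A characteristic `m = (a;b)` is odd if `a'b = 1`. -/
def IsOddChar {g : ℕ} (m : Char2 g) : Prop := aPart m ⬝ᵥ bPart m = 1

instance {g : ℕ} : DecidablePred (IsEvenChar (g := g)) := fun m => by
  unfold IsEvenChar; infer_instance

instance {g : ℕ} : DecidablePred (IsOddChar (g := g)) := fun m => by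
  unfold IsOddChar; infer_instance

/-- The type of `2g × 2g` matrices over `F₂`. -/
abbrev SpMat (g : ℕ) := Matrix (Fin g ⊕ Fin g) (Fin g ⊕ Fin g) (ZMod 2)

/-- The offset `((CD')₀ ; (AB')₀)` appearing in the affine action. -/
def offVec {g : ℕ} (σ : SpMat g) : Char2 g :=
  Sum.elim (Matrix.diag (σ.toBlocks₂₁ * (σ.toBlocks₂₂)ᵀ))
           (Matrix.diag (σ.toBlocks₁₁ * (σ.toBlocks₁₂)ᵀ))

/-- The affine action `σ{m} = (σ')⁻¹ m + ((CD')₀ ; (AB')₀)`. -/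
noncomputable def affAct {g : ℕ} (σ : SpMat g) (m : Char2 g) : Char2 g :=
  (σᵀ)⁻¹ *ᵥ m + offVec σ

/-- The sign `(-1)^x` for `x : F₂`. -/
def sgn2 (x : ZMod 2) : ℤ := if x = 0 then 1 else -1

/-- The quadratic form `M[x] = x' M x`. -/
def quadF {g : ℕ} (M : Matrix (Fin g) (Fin g) (ZMod 2)) (x : Fin g → ZMod 2) : ZMod 2 :=
  x ⬝ᵥ (M *ᵥ x)

/-- `ε_m(σ) = (-1)^{tr(B'C) + (B'D)[a] + (A'C)[b]}`. -/
def epsChar {g : ℕ} (m : Char2 g) (σ : SpMat g) : ℤ :=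
  sgn2 (Matrix.trace ((σ.toBlocks₁₂)ᵀ * σ.toBlocks₂₁)
    + quadF ((σ.toBlocks₁₂)ᵀ * σ.toBlocks₂₂) (aPart m)
    + quadF ((σ.toBlocks₁₁)ᵀ * σ.toBlocks₂₁) (bPart m))

/-- The symplectic pairing `<m,n> = a'β + b'α`. -/
def pairing {g : ℕ} (m n : Char2 g) : ZMod 2 :=
  aPart m ⬝ᵥ bPart n + bPart m ⬝ᵥ aPart n

/-- `e(m,n) = (-1)^{<m,n>}`. -/
def eSign {g : ℕ} (m n : Char2 g) : ℤ := sgn2 (pairing m n)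

/-! ### Auxiliary lemmas -/

section Aux

lemma z2_sq (x : ZMod 2) : x * x = x := by revert x; decide
lemma z2_addself (x : ZMod 2) : x + x = 0 := by revert x; decide
lemma z2norm1 (a : ZMod 2) : a * 2 = 0 := by revert a; decide
lemma z2norm2 (a : ZMod 2) : 2 * a = 0 := by revert a; decide
lemma z2norm3 (a : ZMod 2) : -a = a := by revert a; decide
lemma sgn2_add (x y : ZMod 2) : sgn2 (x + y) = sgn2 x * sgn2 y := by
  revert x y; decide

lemma matNeg {m k : Type*} (M : Matrix m k (ZMod 2)) : -M = M := by
  ext i j; exact z2norm3 _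

lemma matAddSelf {m k : Type*} (M : Matrix m k (ZMod 2)) : M + M = 0 := by
  ext i j; exact z2_addself _

lemma mat_shift {m k : Type*} {X Y Z : Matrix m k (ZMod 2)} (h : X + Y = Z) : Y = X + Z := by
  rw [← h, ← add_assoc, matAddSelf, zero_add]

lemma sum_symm_diag {n : Type*} [Fintype n] [DecidableEq n] (t : n → n → ZMod 2)
    (ht : ∀ i j, t i j = t j i) : ∑ i, ∑ j, t i j = ∑ i, t i i := by
  classical
  have h1 : ∑ i, ∑ j, t i j = ∑ p ∈ Finset.univ ×ˢ Finset.univ, t p.1 p.2 :=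
    (Finset.sum_product' _ _ _).symm
  have hoff : ∑ p ∈ Finset.univ.offDiag, t p.1 p.2 = 0 := by
    apply Finset.sum_involution (fun p _ => Prod.swap p)
    · intro p _; simpa [ht p.1 p.2] using z2_addself (t p.1 p.2)
    · intro p hp _
      simp only [Finset.mem_offDiag] at hp
      intro h
      exact hp.2.2 (congrArg Prod.snd h)
    · intro p hp
      simp only [Finset.mem_offDiag] at hp ⊢
      exact ⟨Finset.mem_univ _, Finset.mem_univ _, fun h => hp.2.2 h.symm⟩
    · intro p _; rfl
  have hdiag : ∑ p ∈ Finset.univ.diag, t p.1 p.2 = ∑ i, t i i := Finset.sum_diag _ _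
  have hsplit : ∑ p ∈ Finset.univ ×ˢ Finset.univ, t p.1 p.2
      = ∑ p ∈ Finset.univ.diag, t p.1 p.2 + ∑ p ∈ Finset.univ.offDiag, t p.1 p.2 := by
    rw [← Finset.diag_union_offDiag, Finset.sum_union (Finset.disjoint_diag_offDiag _)]
  rw [h1, hsplit, hoff, hdiag, add_zero]

variable {g : ℕ}

lemma quadF_symm_eq_diag_dot (S : Matrix (Fin g) (Fin g) (ZMod 2))
    (hS : Sᵀ = S) (x : Fin g → ZMod 2) : quadF S x = Matrix.diag S ⬝ᵥ x := by
  have hs : ∀ i j, S i j = S j i := fun i j => by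
    rw [← hS, Matrix.transpose_apply, hS]
  unfold quadF
  simp only [dotProduct, mulVec, dotProduct, Finset.mul_sum]
  rw [sum_symm_diag (fun i j => x i * (S i j * x j))
    (fun i j => by rw [hs i j]; ring)]
  apply Finset.sum_congr rfl
  intro i _
  show x i * (S i i * x i) = S i i * x i
  rw [mul_comm (S i i) (x i), ← mul_assoc, z2_sq, mul_comm]

lemma trace_symm_mul_symm (S T : Matrix (Fin g) (Fin g) (ZMod 2))
    (hS : Sᵀ = S) (hT : Tᵀ = T) :
    Matrix.trace (S * T) = Matrix.diag S ⬝ᵥ Matrix.diag T := by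
  have hs : ∀ i j, S i j = S j i := fun i j => by rw [← hS, Matrix.transpose_apply, hS]
  have ht : ∀ i j, T i j = T j i := fun i j => by rw [← hT, Matrix.transpose_apply, hT]
  unfold Matrix.trace
  simp only [Matrix.diag, Matrix.mul_apply, dotProduct, Matrix.diag_apply]
  rw [sum_symm_diag (fun i j => S i j * T j i)
    (fun i j => by rw [hs i j, ht j i])]

lemma quadF_conj (S X : Matrix (Fin g) (Fin g) (ZMod 2)) (x : Fin g → ZMod 2) :
    quadF (Xᵀ * S * X) x = quadF S (X *ᵥ x) := by
  unfold quadF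
  rw [← Matrix.mulVec_mulVec, ← Matrix.mulVec_mulVec, Matrix.dotProduct_mulVec,
    Matrix.vecMul_transpose]

lemma quadF_transpose (M : Matrix (Fin g) (Fin g) (ZMod 2)) (x : Fin g → ZMod 2) :
    quadF Mᵀ x = quadF M x := by
  unfold quadF
  rw [Matrix.dotProduct_mulVec, Matrix.vecMul_transpose, dotProduct_comm]

lemma quadF_add (M N : Matrix (Fin g) (Fin g) (ZMod 2)) (x : Fin g → ZMod 2) :
    quadF (M + N) x = quadF M x + quadF N x := by
  unfold quadF
  rw [Matrix.add_mulVec, dotProduct_add]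

set_option maxHeartbeats 1000000 in
lemma key_mul (A B C D A₁ B₁ C₁ D₁ : Matrix (Fin g) (Fin g) (ZMod 2))
    (a b : Fin g → ZMod 2)
    (hAC : (Aᵀ * C)ᵀ = Aᵀ * C) (hBD : (Bᵀ * D)ᵀ = Bᵀ * D)
    (h6 : Cᵀ * B + Aᵀ * D = 1)
    (hA1B1 : (A₁ * B₁ᵀ)ᵀ = A₁ * B₁ᵀ) (hC1D1 : (C₁ * D₁ᵀ)ᵀ = C₁ * D₁ᵀ)
    (h2t : C₁ * B₁ᵀ + D₁ * A₁ᵀ = 1)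
    (st1 : D₁ *ᵥ a + C₁ *ᵥ b + Matrix.diag (C₁ * D₁ᵀ) = a)
    (st2 : B₁ *ᵥ a + A₁ *ᵥ b + Matrix.diag (A₁ * B₁ᵀ) = b) :
    Matrix.trace ((A*B₁+B*D₁)ᵀ * (C*A₁+D*C₁))
      + quadF ((A*B₁+B*D₁)ᵀ * (C*B₁+D*D₁)) a
      + quadF ((A*A₁+B*C₁)ᵀ * (C*A₁+D*C₁)) b
    = (Matrix.trace (Bᵀ*C) + quadF (Bᵀ*D) a + quadF (Aᵀ*C) b)
      + (Matrix.trace (B₁ᵀ*C₁) + quadF (B₁ᵀ*D₁) a + quadF (A₁ᵀ*C₁) b) := by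
  have eBD : (A*B₁+B*D₁)ᵀ * (C*B₁+D*D₁)
      = B₁ᵀ*(Aᵀ*C)*B₁ + (B₁ᵀ*(Aᵀ*D)*D₁ + (D₁ᵀ*(Bᵀ*C)*B₁ + D₁ᵀ*(Bᵀ*D)*D₁)) := by
    simp only [Matrix.transpose_add, Matrix.transpose_mul, Matrix.add_mul, Matrix.mul_add,
      Matrix.mul_assoc]
    abel
  have eAC : (A*A₁+B*C₁)ᵀ * (C*A₁+D*C₁)
      = A₁ᵀ*(Aᵀ*C)*A₁ + (A₁ᵀ*(Aᵀ*D)*C₁ + (C₁ᵀ*(Bᵀ*C)*A₁ + C₁ᵀ*(Bᵀ*D)*C₁)) := by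
    simp only [Matrix.transpose_add, Matrix.transpose_mul, Matrix.add_mul, Matrix.mul_add,
      Matrix.mul_assoc]
    abel
  have eTr : (A*B₁+B*D₁)ᵀ * (C*A₁+D*C₁)
      = B₁ᵀ*(Aᵀ*C)*A₁ + (B₁ᵀ*(Aᵀ*D)*C₁ + (D₁ᵀ*(Bᵀ*C)*A₁ + D₁ᵀ*(Bᵀ*D)*C₁)) := by
    simp only [Matrix.transpose_add, Matrix.transpose_mul, Matrix.add_mul, Matrix.mul_add,
      Matrix.mul_assoc]
    abel
  have q1 : quadF ((A*B₁+B*D₁)ᵀ * (C*B₁+D*D₁)) a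
      = quadF (B₁ᵀ*(Aᵀ*C)*B₁) a + quadF (B₁ᵀ*(Aᵀ*D)*D₁) a
        + quadF (D₁ᵀ*(Bᵀ*C)*B₁) a + quadF (D₁ᵀ*(Bᵀ*D)*D₁) a := by
    rw [eBD, quadF_add, quadF_add, quadF_add]; ring
  have q2 : quadF (B₁ᵀ*(Aᵀ*C)*B₁) a = quadF (Aᵀ*C) (B₁ *ᵥ a) := quadF_conj _ _ _
  have q3 : quadF (D₁ᵀ*(Bᵀ*D)*D₁) a = quadF (Bᵀ*D) (D₁ *ᵥ a) := quadF_conj _ _ _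
  have q4 : quadF (B₁ᵀ*(Aᵀ*D)*D₁) a + quadF (D₁ᵀ*(Bᵀ*C)*B₁) a = quadF (B₁ᵀ*D₁) a := by
    have ht : (D₁ᵀ*(Bᵀ*C)*B₁)ᵀ = B₁ᵀ*(Cᵀ*B)*D₁ := by
      simp only [Matrix.transpose_mul, Matrix.transpose_transpose, Matrix.mul_assoc]
    rw [← quadF_transpose (D₁ᵀ*(Bᵀ*C)*B₁) a, ht, ← quadF_add]
    congr 1
    have : B₁ᵀ*(Aᵀ*D)*D₁ + B₁ᵀ*(Cᵀ*B)*D₁ = B₁ᵀ*(Cᵀ*B + Aᵀ*D)*D₁ := by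
      simp only [Matrix.mul_add, Matrix.add_mul]; abel
    rw [this, h6, Matrix.mul_one]
  have q5 : quadF (A₁ᵀ*(Aᵀ*C)*A₁) b = quadF (Aᵀ*C) (A₁ *ᵥ b) := quadF_conj _ _ _
  have q6 : quadF (C₁ᵀ*(Bᵀ*D)*C₁) b = quadF (Bᵀ*D) (C₁ *ᵥ b) := quadF_conj _ _ _
  have q7 : quadF ((A*A₁+B*C₁)ᵀ * (C*A₁+D*C₁)) b
      = quadF (A₁ᵀ*(Aᵀ*C)*A₁) b + quadF (A₁ᵀ*(Aᵀ*D)*C₁) b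
        + quadF (C₁ᵀ*(Bᵀ*C)*A₁) b + quadF (C₁ᵀ*(Bᵀ*D)*C₁) b := by
    rw [eAC, quadF_add, quadF_add, quadF_add]; ring
  have q8 : quadF (A₁ᵀ*(Aᵀ*D)*C₁) b + quadF (C₁ᵀ*(Bᵀ*C)*A₁) b = quadF (A₁ᵀ*C₁) b := by
    have ht : (C₁ᵀ*(Bᵀ*C)*A₁)ᵀ = A₁ᵀ*(Cᵀ*B)*C₁ := by
      simp only [Matrix.transpose_mul, Matrix.transpose_transpose, Matrix.mul_assoc]
    rw [← quadF_transpose (C₁ᵀ*(Bᵀ*C)*A₁) b, ht, ← quadF_add]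
    congr 1
    have : A₁ᵀ*(Aᵀ*D)*C₁ + A₁ᵀ*(Cᵀ*B)*C₁ = A₁ᵀ*(Cᵀ*B + Aᵀ*D)*C₁ := by
      simp only [Matrix.mul_add, Matrix.add_mul]; abel
    rw [this, h6, Matrix.mul_one]
  have t1 : Matrix.trace ((A*B₁+B*D₁)ᵀ * (C*A₁+D*C₁))
      = Matrix.trace (B₁ᵀ*(Aᵀ*C)*A₁) + Matrix.trace (B₁ᵀ*(Aᵀ*D)*C₁)
        + Matrix.trace (D₁ᵀ*(Bᵀ*C)*A₁) + Matrix.trace (D₁ᵀ*(Bᵀ*D)*C₁) := by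
    rw [eTr, Matrix.trace_add, Matrix.trace_add, Matrix.trace_add]; ring
  have t2 : Matrix.trace (B₁ᵀ*(Aᵀ*C)*A₁) = Matrix.diag (Aᵀ*C) ⬝ᵥ Matrix.diag (A₁*B₁ᵀ) := by
    rw [Matrix.mul_assoc, Matrix.trace_mul_comm, Matrix.mul_assoc]
    exact trace_symm_mul_symm _ _ hAC hA1B1
  have t3 : Matrix.trace (D₁ᵀ*(Bᵀ*D)*C₁) = Matrix.diag (Bᵀ*D) ⬝ᵥ Matrix.diag (C₁*D₁ᵀ) := by
    rw [Matrix.mul_assoc, Matrix.trace_mul_comm, Matrix.mul_assoc]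
    exact trace_symm_mul_symm _ _ hBD hC1D1
  have t4 : Matrix.trace (B₁ᵀ*(Aᵀ*D)*C₁) + Matrix.trace (D₁ᵀ*(Bᵀ*C)*A₁)
      = Matrix.trace (B₁ᵀ*C₁) + Matrix.trace (Bᵀ*C) := by
    have hY : Aᵀ*D = Cᵀ*B + 1 := by
      have := mat_shift h6; rw [this]
    have hV : D₁*A₁ᵀ = C₁*B₁ᵀ + 1 := by
      have := mat_shift h2t; rw [this]
    have e1 : Matrix.trace (B₁ᵀ*(Aᵀ*D)*C₁) = Matrix.trace ((Aᵀ*D)*(C₁*B₁ᵀ)) := by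
      rw [Matrix.mul_assoc, Matrix.trace_mul_comm, Matrix.mul_assoc]
    have e2 : Matrix.trace (D₁ᵀ*(Bᵀ*C)*A₁) = Matrix.trace ((Cᵀ*B)*(D₁*A₁ᵀ)) := by
      rw [← Matrix.trace_transpose (D₁ᵀ*(Bᵀ*C)*A₁)]
      have : (D₁ᵀ*(Bᵀ*C)*A₁)ᵀ = A₁ᵀ*((Cᵀ*B)*D₁) := by
        simp only [Matrix.transpose_mul, Matrix.transpose_transpose, Matrix.mul_assoc]
      rw [this, Matrix.trace_mul_comm, Matrix.mul_assoc]
    rw [e1, e2, hY, hV]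
    simp only [Matrix.add_mul, Matrix.mul_add, Matrix.mul_one, Matrix.one_mul,
      Matrix.trace_add]
    have hc : Matrix.trace (C₁*B₁ᵀ) = Matrix.trace (B₁ᵀ*C₁) := Matrix.trace_mul_comm _ _
    have hd : Matrix.trace (Cᵀ*B) = Matrix.trace (Bᵀ*C) := by
      rw [← Matrix.trace_transpose (Cᵀ*B)]
      simp only [Matrix.transpose_mul, Matrix.transpose_transpose]
    linear_combination (norm := (ring_nf; simp only [z2norm1, z2norm2, z2norm3, add_zero, zero_add, neg_zero, sub_zero, sub_self])) hc + hd
  have d1 : quadF (Aᵀ*C) (B₁ *ᵥ a) = Matrix.diag (Aᵀ*C) ⬝ᵥ (B₁ *ᵥ a) :=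
    quadF_symm_eq_diag_dot _ hAC _
  have d2 : quadF (Aᵀ*C) (A₁ *ᵥ b) = Matrix.diag (Aᵀ*C) ⬝ᵥ (A₁ *ᵥ b) :=
    quadF_symm_eq_diag_dot _ hAC _
  have d3 : quadF (Aᵀ*C) b = Matrix.diag (Aᵀ*C) ⬝ᵥ b := quadF_symm_eq_diag_dot _ hAC _
  have d4 : quadF (Bᵀ*D) (D₁ *ᵥ a) = Matrix.diag (Bᵀ*D) ⬝ᵥ (D₁ *ᵥ a) :=
    quadF_symm_eq_diag_dot _ hBD _
  have d5 : quadF (Bᵀ*D) (C₁ *ᵥ b) = Matrix.diag (Bᵀ*D) ⬝ᵥ (C₁ *ᵥ b) :=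
    quadF_symm_eq_diag_dot _ hBD _
  have d6 : quadF (Bᵀ*D) a = Matrix.diag (Bᵀ*D) ⬝ᵥ a := quadF_symm_eq_diag_dot _ hBD _
  have hL1 : Matrix.diag (Aᵀ*C) ⬝ᵥ b
      = Matrix.diag (Aᵀ*C) ⬝ᵥ (B₁ *ᵥ a) + Matrix.diag (Aᵀ*C) ⬝ᵥ (A₁ *ᵥ b)
        + Matrix.diag (Aᵀ*C) ⬝ᵥ Matrix.diag (A₁*B₁ᵀ) := by
    conv_lhs => rw [← st2]
    rw [dotProduct_add, dotProduct_add]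
  have hL2 : Matrix.diag (Bᵀ*D) ⬝ᵥ a
      = Matrix.diag (Bᵀ*D) ⬝ᵥ (D₁ *ᵥ a) + Matrix.diag (Bᵀ*D) ⬝ᵥ (C₁ *ᵥ b)
        + Matrix.diag (Bᵀ*D) ⬝ᵥ Matrix.diag (C₁*D₁ᵀ) := by
    conv_lhs => rw [← st1]
    rw [dotProduct_add, dotProduct_add]
  linear_combination (norm := (ring_nf; simp only [z2norm1, z2norm2, z2norm3, add_zero, zero_add, neg_zero, sub_zero, sub_self])) q1 + q2 + q3 + q4 + q5 + q6 + q7 + q8 + t1 + t2 + t3 + t4 + d1 + d2 + d3 + d4 + d5 + d6 + hL1 + hL2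

lemma sympl_facts (A B C D : Matrix (Fin g) (Fin g) (ZMod 2))
    (hσ : Matrix.fromBlocks A B C D ∈ Matrix.symplecticGroup (Fin g) (ZMod 2)) :
    (A*Bᵀ)ᵀ = A*Bᵀ ∧ (C*Dᵀ)ᵀ = C*Dᵀ ∧ C*Bᵀ + D*Aᵀ = 1 ∧
    (Aᵀ*C)ᵀ = Aᵀ*C ∧ (Bᵀ*D)ᵀ = Bᵀ*D ∧ Cᵀ*B + Aᵀ*D = 1 := by
  have h1 := SymplecticGroup.mem_iff.mp hσ
  have h2 := SymplecticGroup.mem_iff'.mp hσ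
  rw [Matrix.J, Matrix.fromBlocks_transpose, Matrix.fromBlocks_multiply,
    Matrix.fromBlocks_multiply] at h1
  rw [Matrix.J, Matrix.fromBlocks_transpose, Matrix.fromBlocks_multiply,
    Matrix.fromBlocks_multiply] at h2
  simp only [Matrix.mul_neg, Matrix.neg_mul, matNeg, Matrix.mul_zero, Matrix.zero_mul,
    Matrix.mul_one, Matrix.one_mul, add_zero, zero_add] at h1 h2
  obtain ⟨e11, e12, e21, e22⟩ := Matrix.fromBlocks_inj.mp h1
  obtain ⟨f11, f12, f21, f22⟩ := Matrix.fromBlocks_inj.mp h2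
  refine ⟨?_, ?_, ?_, ?_, ?_, ?_⟩
  · rw [Matrix.transpose_mul, Matrix.transpose_transpose, mat_shift e11, add_zero]
  · rw [Matrix.transpose_mul, Matrix.transpose_transpose, mat_shift e22, add_zero]
  · rw [add_comm]; exact e21
  · rw [Matrix.transpose_mul, Matrix.transpose_transpose, mat_shift f11, add_zero]
  · rw [Matrix.transpose_mul, Matrix.transpose_transpose, mat_shift f22, add_zero]
  · exact f12

lemma tinv (A B C D : Matrix (Fin g) (Fin g) (ZMod 2))
    (hσ : Matrix.fromBlocks A B C D ∈ Matrix.symplecticGroup (Fin g) (ZMod 2)) :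
    ((Matrix.fromBlocks A B C D)ᵀ)⁻¹ = Matrix.fromBlocks D C B A := by
  have h := SymplecticGroup.inv_eq_symplectic_inv _ (SymplecticGroup.transpose_mem hσ)
  rw [h, Matrix.transpose_transpose, Matrix.J, matNeg, Matrix.fromBlocks_multiply,
    Matrix.fromBlocks_multiply]
  simp only [Matrix.mul_neg, Matrix.neg_mul, matNeg, Matrix.mul_zero, Matrix.zero_mul,
    Matrix.mul_one, Matrix.one_mul, add_zero, zero_add]

lemma sum_elim_rep (m : Char2 g) : m = Sum.elim (aPart m) (bPart m) := by
  funext i; cases i <;> rfl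

lemma stab_eqs (A B C D : Matrix (Fin g) (Fin g) (ZMod 2))
    (hσ : Matrix.fromBlocks A B C D ∈ Matrix.symplecticGroup (Fin g) (ZMod 2))
    (m : Char2 g) (hm : affAct (Matrix.fromBlocks A B C D) m = m) :
    (D *ᵥ aPart m + C *ᵥ bPart m + Matrix.diag (C*Dᵀ) = aPart m) ∧
    (B *ᵥ aPart m + A *ᵥ bPart m + Matrix.diag (A*Bᵀ) = bPart m) := by
  unfold affAct offVec at hm
  rw [tinv A B C D hσ] at hm
  rw [sum_elim_rep m, Matrix.fromBlocks_mulVec] at hm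
  simp only [Matrix.toBlocks_fromBlocks₁₁, Matrix.toBlocks_fromBlocks₁₂,
    Matrix.toBlocks_fromBlocks₂₁, Matrix.toBlocks_fromBlocks₂₂] at hm
  constructor
  · funext i
    have h1 := congrFun hm (Sum.inl i)
    simp only [Pi.add_apply, Sum.elim_inl] at h1
    simpa [add_assoc] using h1
  · funext i
    have h1 := congrFun hm (Sum.inr i)
    simp only [Pi.add_apply, Sum.elim_inr] at h1
    simpa [add_assoc] using h1


section S2
variable {g : ℕ} (i0 : Fin g)

-- Facts about E
lemma EE : Matrix.single i0 i0 (1:ZMod 2) * Matrix.single i0 i0 1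
    = Matrix.single i0 i0 1 := by
  rw [Matrix.single_mul_single_same, one_mul]

lemma ET : (Matrix.single i0 i0 (1:ZMod 2))ᵀ = Matrix.single i0 i0 1 := by
  ext i j
  rw [Matrix.transpose_apply]
  simp [Matrix.single, and_comm]

lemma Ev (x : Fin g → ZMod 2) (j : Fin g) :
    (Matrix.single i0 i0 (1:ZMod 2) *ᵥ x) j = if j = i0 then x i0 else 0 := by
  simp [Matrix.mulVec, dotProduct, Matrix.single, ite_and, eq_comm (a := i0)]

lemma dE (j : Fin g) : Matrix.diag (Matrix.single i0 i0 (1:ZMod 2)) j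
    = if j = i0 then (1 : ZMod 2) else 0 := by
  simp [Matrix.diag, Matrix.single, eq_comm (a := i0)]

lemma qE (x : Fin g → ZMod 2) : quadF (Matrix.single i0 i0 (1:ZMod 2)) x = x i0 := by
  unfold quadF
  simp only [dotProduct, Ev, mul_ite, mul_zero]
  rw [Finset.sum_ite_eq' Finset.univ i0 (fun j => x j * x i0)]
  simp [z2_sq]

lemma q0 (x : Fin g → ZMod 2) : quadF (0 : Matrix (Fin g) (Fin g) (ZMod 2)) x = 0 := by
  unfold quadF; simp

lemma shear2_mem :
    (Matrix.fromBlocks 1 (Matrix.single i0 i0 (1:ZMod 2)) 0 1)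
      ∈ Matrix.symplecticGroup (Fin g) (ZMod 2) := by
  rw [SymplecticGroup.mem_iff, Matrix.J, Matrix.fromBlocks_transpose,
    Matrix.fromBlocks_multiply, Matrix.fromBlocks_multiply]
  simp only [Matrix.mul_neg, Matrix.neg_mul, matNeg, Matrix.mul_zero, Matrix.zero_mul,
    Matrix.mul_one, Matrix.one_mul, Matrix.transpose_one, Matrix.transpose_zero, ET,
    add_zero, zero_add]
  refine Matrix.fromBlocks_inj.mpr ⟨?_, ?_, ?_, ?_⟩ <;>
    first
      | rfl
      | (rw [add_comm, matAddSelf]) | (rw [matAddSelf])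

lemma shear2_inv :
    ((Matrix.fromBlocks 1 (Matrix.single i0 i0 (1:ZMod 2)) 0 1 : SpMat g)ᵀ)⁻¹
      = Matrix.fromBlocks 1 0 (Matrix.single i0 i0 (1:ZMod 2)) 1 := by
  rw [Matrix.fromBlocks_transpose, Matrix.transpose_one, Matrix.transpose_zero, ET]
  apply Matrix.inv_eq_right_inv
  rw [Matrix.fromBlocks_multiply]
  simp only [Matrix.mul_zero, Matrix.zero_mul, Matrix.mul_one, Matrix.one_mul,
    add_zero, zero_add]
  rw [matAddSelf, ← Matrix.fromBlocks_one]

lemma shear2_aff (m : Char2 g) (ha : aPart m i0 = 1) :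
    affAct (Matrix.fromBlocks 1 (Matrix.single i0 i0 (1:ZMod 2)) 0 1) m = m := by
  unfold affAct offVec
  rw [shear2_inv]
  simp only [Matrix.toBlocks_fromBlocks₁₁, Matrix.toBlocks_fromBlocks₁₂,
    Matrix.toBlocks_fromBlocks₂₁, Matrix.toBlocks_fromBlocks₂₂]
  conv_lhs => rw [sum_elim_rep m]
  rw [Matrix.fromBlocks_mulVec]
  conv_rhs => rw [sum_elim_rep m]
  funext i
  cases i with
  | inl i =>
    simp [Matrix.one_mulVec, Matrix.zero_mulVec, Matrix.transpose_one,
      Sum.elim_comp_inl, Sum.elim_comp_inr]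
  | inr i =>
    simp only [Pi.add_apply, Sum.elim_inr, Sum.elim_comp_inl, Sum.elim_comp_inr,
      Matrix.one_mulVec, Matrix.zero_mulVec, Matrix.transpose_zero, Matrix.mul_zero,
      Matrix.one_mul, ET, Ev, dE]
    by_cases h : i = i0
    · subst h; simp only [if_pos rfl, ha]; generalize bPart m i = y; revert y; decide
    · simp [h]

lemma shear2_eps (m : Char2 g) (ha : aPart m i0 = 1) :
    epsChar m (Matrix.fromBlocks 1 (Matrix.single i0 i0 (1:ZMod 2)) 0 1) = -1 := by
  unfold epsChar
  simp only [Matrix.toBlocks_fromBlocks₁₁, Matrix.toBlocks_fromBlocks₁₂,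
    Matrix.toBlocks_fromBlocks₂₁, Matrix.toBlocks_fromBlocks₂₂]
  rw [ET, Matrix.mul_zero, Matrix.mul_one, Matrix.transpose_one, Matrix.one_mul,
    Matrix.trace_zero, qE, q0, ha]
  decide

end S2

section S3
variable {g : ℕ} (i0 : Fin g)

lemma shear3_mem :
    (Matrix.fromBlocks 1 0 (Matrix.single i0 i0 (1:ZMod 2)) 1)
      ∈ Matrix.symplecticGroup (Fin g) (ZMod 2) := by
  rw [SymplecticGroup.mem_iff, Matrix.J, Matrix.fromBlocks_transpose,
    Matrix.fromBlocks_multiply, Matrix.fromBlocks_multiply]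
  simp only [Matrix.mul_neg, Matrix.neg_mul, matNeg, Matrix.mul_zero, Matrix.zero_mul,
    Matrix.mul_one, Matrix.one_mul, Matrix.transpose_one, Matrix.transpose_zero, ET,
    add_zero, zero_add]
  refine Matrix.fromBlocks_inj.mpr ⟨?_, ?_, ?_, ?_⟩ <;>
    first
      | rfl
      | (rw [add_comm, matAddSelf]) | (rw [matAddSelf])

lemma shear3_inv :
    ((Matrix.fromBlocks 1 0 (Matrix.single i0 i0 (1:ZMod 2)) 1 : SpMat g)ᵀ)⁻¹
      = Matrix.fromBlocks 1 (Matrix.single i0 i0 (1:ZMod 2)) 0 1 := by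
  rw [Matrix.fromBlocks_transpose, Matrix.transpose_one, Matrix.transpose_zero, ET]
  apply Matrix.inv_eq_right_inv
  rw [Matrix.fromBlocks_multiply]
  simp only [Matrix.mul_zero, Matrix.zero_mul, Matrix.mul_one, Matrix.one_mul,
    add_zero, zero_add]
  rw [matAddSelf, ← Matrix.fromBlocks_one]

lemma shear3_aff (m : Char2 g) (hb : bPart m i0 = 1) :
    affAct (Matrix.fromBlocks 1 0 (Matrix.single i0 i0 (1:ZMod 2)) 1) m = m := by
  unfold affAct offVec
  rw [shear3_inv]
  simp only [Matrix.toBlocks_fromBlocks₁₁, Matrix.toBlocks_fromBlocks₁₂,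
    Matrix.toBlocks_fromBlocks₂₁, Matrix.toBlocks_fromBlocks₂₂]
  conv_lhs => rw [sum_elim_rep m]
  rw [Matrix.fromBlocks_mulVec]
  conv_rhs => rw [sum_elim_rep m]
  funext i
  cases i with
  | inr i =>
    simp [Matrix.one_mulVec, Matrix.zero_mulVec, Matrix.transpose_zero,
      Sum.elim_comp_inl, Sum.elim_comp_inr]
  | inl i =>
    simp only [Pi.add_apply, Sum.elim_inl, Sum.elim_comp_inl, Sum.elim_comp_inr,
      Matrix.one_mulVec, Matrix.zero_mulVec, Matrix.transpose_one, Matrix.mul_one,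
      Ev, dE]
    by_cases h : i = i0
    · subst h; simp only [if_pos rfl, hb]; generalize aPart m i = y; revert y; decide
    · simp [h]

lemma shear3_eps (m : Char2 g) (hb : bPart m i0 = 1) :
    epsChar m (Matrix.fromBlocks 1 0 (Matrix.single i0 i0 (1:ZMod 2)) 1) = -1 := by
  unfold epsChar
  simp only [Matrix.toBlocks_fromBlocks₁₁, Matrix.toBlocks_fromBlocks₁₂,
    Matrix.toBlocks_fromBlocks₂₁, Matrix.toBlocks_fromBlocks₂₂]
  rw [Matrix.transpose_zero, Matrix.zero_mul, Matrix.zero_mul, Matrix.trace_zero,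
    Matrix.transpose_one, Matrix.one_mul, qE, q0, hb]
  decide

end S3

section S1
variable {g : ℕ} (i0 : Fin g)

lemma oneET : ((1 : Matrix (Fin g) (Fin g) (ZMod 2)) + Matrix.single i0 i0 1)ᵀ
    = 1 + Matrix.single i0 i0 1 := by
  rw [Matrix.transpose_add, Matrix.transpose_one, ET]

lemma hE1' : Matrix.single i0 i0 (1:ZMod 2) * (1 + Matrix.single i0 i0 1) = 0 := by
  rw [Matrix.mul_add, Matrix.mul_one, EE, matAddSelf]

lemma h1E' : (1 + Matrix.single i0 i0 (1:ZMod 2)) * Matrix.single i0 i0 1 = 0 := by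
  rw [Matrix.add_mul, Matrix.one_mul, EE, matAddSelf]

lemma h11' : (1 + Matrix.single i0 i0 (1:ZMod 2)) * (1 + Matrix.single i0 i0 1)
    = 1 + Matrix.single i0 i0 1 := by
  rw [Matrix.add_mul, Matrix.one_mul, hE1', add_zero]

lemma hcrossA : Matrix.single i0 i0 (1:ZMod 2)
    + (1 + Matrix.single i0 i0 1) = (1 : Matrix (Fin g) (Fin g) (ZMod 2)) := by
  rw [add_comm (1 : Matrix (Fin g) (Fin g) (ZMod 2)) (Matrix.single i0 i0 1),
    ← add_assoc, matAddSelf, zero_add]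

lemma hcrossB : (1 + Matrix.single i0 i0 (1:ZMod 2))
    + Matrix.single i0 i0 1 = (1 : Matrix (Fin g) (Fin g) (ZMod 2)) := by
  rw [add_assoc, matAddSelf, add_zero]

lemma swap_mem :
    (Matrix.fromBlocks (1 + Matrix.single i0 i0 (1:ZMod 2))
      (Matrix.single i0 i0 1) (Matrix.single i0 i0 1)
      (1 + Matrix.single i0 i0 1))
      ∈ Matrix.symplecticGroup (Fin g) (ZMod 2) := by
  rw [SymplecticGroup.mem_iff, Matrix.J, Matrix.fromBlocks_transpose,
    Matrix.fromBlocks_multiply, Matrix.fromBlocks_multiply]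
  simp only [Matrix.mul_neg, Matrix.neg_mul, matNeg, Matrix.mul_zero, Matrix.zero_mul,
    Matrix.mul_one, Matrix.one_mul, oneET, ET, add_zero, zero_add]
  refine Matrix.fromBlocks_inj.mpr ⟨?_, ?_, ?_, ?_⟩
  · rw [hE1', h1E', add_zero]
  · rw [EE, h11', hcrossA]
  · rw [h11', EE, hcrossB]
  · rw [h1E', hE1', add_zero]

lemma swap_sq :
    (Matrix.fromBlocks (1 + Matrix.single i0 i0 (1:ZMod 2))
      (Matrix.single i0 i0 1) (Matrix.single i0 i0 1)
      (1 + Matrix.single i0 i0 1) : SpMat g)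
    * (Matrix.fromBlocks (1 + Matrix.single i0 i0 1)
      (Matrix.single i0 i0 1) (Matrix.single i0 i0 1)
      (1 + Matrix.single i0 i0 1)) = 1 := by
  rw [Matrix.fromBlocks_multiply, h11', EE, hE1', h1E']
  rw [hcrossB, hcrossA, add_zero, ← Matrix.fromBlocks_one]

lemma swap_inv :
    ((Matrix.fromBlocks (1 + Matrix.single i0 i0 (1:ZMod 2))
      (Matrix.single i0 i0 1) (Matrix.single i0 i0 1)
      (1 + Matrix.single i0 i0 1) : SpMat g)ᵀ)⁻¹
    = Matrix.fromBlocks (1 + Matrix.single i0 i0 1)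
      (Matrix.single i0 i0 1) (Matrix.single i0 i0 1)
      (1 + Matrix.single i0 i0 1) := by
  rw [Matrix.fromBlocks_transpose, oneET, ET]
  exact Matrix.inv_eq_right_inv (swap_sq i0)

lemma swap_aff (m : Char2 g) (hab : aPart m i0 = bPart m i0) :
    affAct (Matrix.fromBlocks (1 + Matrix.single i0 i0 (1:ZMod 2))
      (Matrix.single i0 i0 1) (Matrix.single i0 i0 1)
      (1 + Matrix.single i0 i0 1)) m = m := by
  unfold affAct offVec
  rw [swap_inv]
  simp only [Matrix.toBlocks_fromBlocks₁₁, Matrix.toBlocks_fromBlocks₁₂,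
    Matrix.toBlocks_fromBlocks₂₁, Matrix.toBlocks_fromBlocks₂₂]
  rw [oneET, ET, hE1', h1E', Matrix.diag_zero]
  conv_lhs => rw [sum_elim_rep m]
  rw [Matrix.fromBlocks_mulVec]
  conv_rhs => rw [sum_elim_rep m]
  funext i
  cases i with
  | inl i =>
    simp only [Pi.add_apply, Sum.elim_inl, Sum.elim_comp_inl, Sum.elim_comp_inr,
      Matrix.add_mulVec, Matrix.one_mulVec, Pi.zero_apply, Ev]
    by_cases h : i = i0
    · subst h; simp only [if_pos rfl, hab]; generalize bPart m i = y; revert y; decide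
    · simp [h]
  | inr i =>
    simp only [Pi.add_apply, Sum.elim_inr, Sum.elim_comp_inl, Sum.elim_comp_inr,
      Matrix.add_mulVec, Matrix.one_mulVec, Pi.zero_apply, Ev]
    by_cases h : i = i0
    · subst h; simp only [if_pos rfl, hab]; generalize bPart m i = y; revert y; decide
    · simp [h]

lemma swap_eps (m : Char2 g) :
    epsChar m (Matrix.fromBlocks (1 + Matrix.single i0 i0 (1:ZMod 2))
      (Matrix.single i0 i0 1) (Matrix.single i0 i0 1)
      (1 + Matrix.single i0 i0 1)) = -1 := by
  unfold epsChar
  simp only [Matrix.toBlocks_fromBlocks₁₁, Matrix.toBlocks_fromBlocks₁₂,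
    Matrix.toBlocks_fromBlocks₂₁, Matrix.toBlocks_fromBlocks₂₂]
  rw [ET, oneET, EE, hE1', h1E', q0, q0, Matrix.trace_single_eq_same]
  decide

end S1

end Aux

/-- for fixed `m`, the restriction of `ε_m` to the stabilizer
`H(m)` is a group homomorphism with values in `{±1}`, and it is non-trivial. -/
theorem eps_is_nontrivial_character_on_stabilizer (g : ℕ) (hg : 1 ≤ g) (m : Char2 g) :
    (∀ σ τ : SpMat g, σ ∈ Matrix.symplecticGroup (Fin g) (ZMod 2) →
      τ ∈ Matrix.symplecticGroup (Fin g) (ZMod 2) →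
      affAct σ m = m → affAct τ m = m →
      epsChar m (σ * τ) = epsChar m σ * epsChar m τ) ∧
    (∀ σ : SpMat g, σ ∈ Matrix.symplecticGroup (Fin g) (ZMod 2) →
      affAct σ m = m → epsChar m σ = 1 ∨ epsChar m σ = -1) ∧
    (∃ σ : SpMat g, σ ∈ Matrix.symplecticGroup (Fin g) (ZMod 2) ∧
      affAct σ m = m ∧ epsChar m σ = -1) := by
  refine ⟨?_, ?_, ?_⟩
  · intro σ τ hσ hτ hσm hτm
    obtain ⟨A, B, C, D, rfl⟩ : ∃ A B C D, σ = Matrix.fromBlocks A B C D :=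
      ⟨_, _, _, _, (Matrix.fromBlocks_toBlocks σ).symm⟩
    obtain ⟨A₁, B₁, C₁, D₁, rfl⟩ : ∃ A₁ B₁ C₁ D₁, τ = Matrix.fromBlocks A₁ B₁ C₁ D₁ :=
      ⟨_, _, _, _, (Matrix.fromBlocks_toBlocks τ).symm⟩
    obtain ⟨_, _, _, sAC, sBD, sh6⟩ := sympl_facts A B C D hσ
    obtain ⟨tAB, tCD, th2, _, _, _⟩ := sympl_facts A₁ B₁ C₁ D₁ hτ
    obtain ⟨st1, st2⟩ := stab_eqs A₁ B₁ C₁ D₁ hτ m hτm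
    unfold epsChar
    rw [Matrix.fromBlocks_multiply]
    simp only [Matrix.toBlocks_fromBlocks₁₁, Matrix.toBlocks_fromBlocks₁₂,
      Matrix.toBlocks_fromBlocks₂₁, Matrix.toBlocks_fromBlocks₂₂]
    rw [key_mul A B C D A₁ B₁ C₁ D₁ (aPart m) (bPart m) sAC sBD sh6 tAB tCD th2 st1 st2,
      sgn2_add]
  · intro σ _ _
    unfold epsChar sgn2
    split
    · exact Or.inl rfl
    · exact Or.inr rfl
  · have hg0 : (0:ℕ) < g := hg
    set i0 : Fin g := ⟨0, hg0⟩
    by_cases ha : aPart m i0 = 1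
    · exact ⟨_, shear2_mem i0, shear2_aff i0 m ha, shear2_eps i0 m ha⟩
    · by_cases hb : bPart m i0 = 1
      · exact ⟨_, shear3_mem i0, shear3_aff i0 m hb, shear3_eps i0 m hb⟩
      · have hab : aPart m i0 = bPart m i0 := by
          have h2 : ∀ x y : ZMod 2, ¬x = 1 → ¬y = 1 → x = y := by decide
          exact h2 _ _ ha hb
        exact ⟨_, swap_mem i0, swap_aff i0 m hab, swap_eps i0 m⟩
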